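/- Let K₁ ≥ 1 be a real number and let Δt be a real number with 0 < Δt < (2 + K₁)⁻¹. Then for every nonnegative integer k, [Γ(k + Δt⁻¹ − K₁)² · Γ(Δt⁻¹)²] / [Γ(k + Δt⁻¹)² · Γ(Δt⁻¹ − K₁)²] ≤ ((k − K₁)Δt + 1)^{−2K₁}. -/

import Mathlib

open Real

/-- Bernoulli-type step: for `y > K ≥ 1`, `(y - K) * (y+1)^K ≤ y^(K+1)`. -/
lemma bern_step {y K : ℝ} (hK : 1 ≤ K) (hy : K < y) :
    (y - K) * (y + 1) ^ K ≤ y ^ (K + 1) := by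
  have hy0 : 0 < y := lt_of_le_of_lt (le_trans zero_le_one hK) hy
  have hy1 : 0 < y + 1 := by linarith
  have hs : -1 ≤ -(1 / (y + 1)) := by
    have : 1 / (y + 1) ≤ 1 := by
      rw [div_le_one hy1]; linarith
    linarith
  have hb := one_add_mul_self_le_rpow_one_add hs hK
  have h1 : 1 + -(1 / (y + 1)) = y / (y + 1) := by field_simp; ring
  rw [h1] at hb
  have h2 : (y - K) / y ≤ (y / (y + 1)) ^ K := by
    refine le_trans ?_ hb
    rw [div_le_iff₀ hy0]
    have h : (1 + K * -(1 / (y + 1))) * y = y - K * (y / (y + 1)) := by ring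
    rw [h, sub_le_sub_iff_left]
    have : y / (y + 1) ≤ 1 := by rw [div_le_one hy1]; linarith
    nlinarith
  have h3 : (y / (y + 1)) ^ K = y ^ K / (y + 1) ^ K :=
    Real.div_rpow hy0.le hy1.le K
  rw [h3] at h2
  have hyp : (0:ℝ) < (y + 1) ^ K := Real.rpow_pos_of_pos hy1 K
  rw [div_le_div_iff₀ hy0 hyp] at h2
  calc (y - K) * (y + 1) ^ K ≤ y ^ K * y := h2
    _ = y ^ (K + 1) := (Real.rpow_add_one hy0.ne' K).symm

/-- Estimate (3.6) in the proof of Theorem 3.1. -/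
theorem gamma_ratio_sq_le (K₁ Δt : ℝ) (hK₁ : 1 ≤ K₁)
    (hΔt0 : 0 < Δt) (hΔt : Δt < (2 + K₁)⁻¹) :
    ∀ k : ℕ,
      Real.Gamma ((k : ℝ) + Δt⁻¹ - K₁) ^ 2 * Real.Gamma Δt⁻¹ ^ 2 /
          (Real.Gamma ((k : ℝ) + Δt⁻¹) ^ 2 * Real.Gamma (Δt⁻¹ - K₁) ^ 2) ≤
        (((k : ℝ) - K₁) * Δt + 1) ^ (-(2 * K₁)) := by
  set a := Δt⁻¹ with ha
  have hK0 : 0 < K₁ := lt_of_lt_of_le one_pos hK₁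
  have h2K : (0:ℝ) < 2 + K₁ := by linarith
  have haa : 2 + K₁ < a := by
    have h := inv_strictAnti₀ hΔt0 hΔt
    rwa [inv_inv] at h
  have ha0 : 0 < a := by linarith
  have haK : 0 < a - K₁ := by linarith
  have hGa : 0 < Real.Gamma a := Real.Gamma_pos_of_pos ha0
  have hGaK : 0 < Real.Gamma (a - K₁) := Real.Gamma_pos_of_pos haK
  -- key inequality by induction
  have key : ∀ k : ℕ, Real.Gamma ((k : ℝ) + a - K₁) * Real.Gamma a * ((k : ℝ) + a) ^ K₁ ≤
      a ^ K₁ * (Real.Gamma ((k : ℝ) + a) * Real.Gamma (a - K₁)) := by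
    intro k
    induction k with
    | zero =>
      simp only [Nat.cast_zero, zero_add]
      ring_nf
      exact le_refl _
    | succ k ih =>
      have hx0 : (0:ℝ) < (k : ℝ) + a - K₁ := by
        have : (0:ℝ) ≤ (k : ℝ) := Nat.cast_nonneg k
        linarith
      have hy0 : (0:ℝ) < (k : ℝ) + a := by positivity
      have hG1 : 0 < Real.Gamma ((k : ℝ) + a - K₁) := Real.Gamma_pos_of_pos hx0
      have hG2 : 0 < Real.Gamma ((k : ℝ) + a) := Real.Gamma_pos_of_pos hy0
      have e1 : ((k : ℕ) + 1 : ℕ) = (k : ℕ) + 1 := rfl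
      have r1 : Real.Gamma (((k : ℕ) + 1 : ℕ) + a - K₁)
          = ((k : ℝ) + a - K₁) * Real.Gamma ((k : ℝ) + a - K₁) := by
        have : (((k : ℕ) + 1 : ℕ) : ℝ) + a - K₁ = ((k : ℝ) + a - K₁) + 1 := by
          push_cast; ring
        rw [this, Real.Gamma_add_one hx0.ne']
      have r2 : Real.Gamma (((k : ℕ) + 1 : ℕ) + a)
          = ((k : ℝ) + a) * Real.Gamma ((k : ℝ) + a) := by
        have : (((k : ℕ) + 1 : ℕ) : ℝ) + a = ((k : ℝ) + a) + 1 := by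
          push_cast; ring
        rw [this, Real.Gamma_add_one hy0.ne']
      have r3 : (((k : ℕ) + 1 : ℕ) : ℝ) + a = ((k : ℝ) + a) + 1 := by push_cast; ring
      rw [r1, r2, r3]
      have hyK : K₁ < (k : ℝ) + a := by
        have : (0:ℝ) ≤ (k : ℝ) := Nat.cast_nonneg k
        linarith
      have hb := bern_step hK₁ hyK
      -- (y - K₁) * (y+1)^K₁ ≤ y^K₁ * y
      rw [Real.rpow_add_one hy0.ne'] at hb
      have hGG : 0 < Real.Gamma ((k : ℝ) + a - K₁) * Real.Gamma a := by positivity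
      calc ((k : ℝ) + a - K₁) * Real.Gamma ((k : ℝ) + a - K₁) * Real.Gamma a *
              (((k : ℝ) + a) + 1) ^ K₁
          = (((k : ℝ) + a - K₁) * (((k : ℝ) + a) + 1) ^ K₁) *
              (Real.Gamma ((k : ℝ) + a - K₁) * Real.Gamma a) := by ring
        _ ≤ (((k : ℝ) + a) ^ K₁ * ((k : ℝ) + a)) *
              (Real.Gamma ((k : ℝ) + a - K₁) * Real.Gamma a) :=
            mul_le_mul_of_nonneg_right hb hGG.le
        _ = ((k : ℝ) + a) * (Real.Gamma ((k : ℝ) + a - K₁) * Real.Gamma a *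
              ((k : ℝ) + a) ^ K₁) := by ring
        _ ≤ ((k : ℝ) + a) * (a ^ K₁ * (Real.Gamma ((k : ℝ) + a) * Real.Gamma (a - K₁))) :=
            mul_le_mul_of_nonneg_left ih hy0.le
        _ = a ^ K₁ * (((k : ℝ) + a) * Real.Gamma ((k : ℝ) + a) * Real.Gamma (a - K₁)) := by
            ring
  -- finish
  intro k
  have hx0 : (0:ℝ) < (k : ℝ) + a - K₁ := by
    have : (0:ℝ) ≤ (k : ℝ) := Nat.cast_nonneg k
    linarith
  have hy0 : (0:ℝ) < (k : ℝ) + a := by positivity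
  have hG1 : 0 < Real.Gamma ((k : ℝ) + a - K₁) := Real.Gamma_pos_of_pos hx0
  have hG2 : 0 < Real.Gamma ((k : ℝ) + a) := Real.Gamma_pos_of_pos hy0
  -- rewrite the RHS
  have hbase : ((k : ℝ) - K₁) * Δt + 1 = ((k : ℝ) + a - K₁) * Δt := by
    have : a * Δt = 1 := inv_mul_cancel₀ hΔt0.ne'
    nlinarith [this]
  have hrhs : (((k : ℝ) - K₁) * Δt + 1) ^ (-(2 * K₁))
      = a ^ (2 * K₁) / ((k : ℝ) + a - K₁) ^ (2 * K₁) := by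
    rw [hbase, Real.mul_rpow hx0.le hΔt0.le, Real.rpow_neg hx0.le,
      Real.rpow_neg hΔt0.le, ← Real.inv_rpow hΔt0.le, ← ha, div_eq_mul_inv]
    ring
  rw [hrhs]
  have hxK : (0:ℝ) < ((k : ℝ) + a - K₁) ^ (2 * K₁) := Real.rpow_pos_of_pos hx0 _
  rw [div_le_div_iff₀ (by positivity) hxK]
  -- square the key inequality
  have hk := key k
  have hsq : (Real.Gamma ((k : ℝ) + a - K₁) * Real.Gamma a * ((k : ℝ) + a) ^ K₁) ^ 2 ≤
      (a ^ K₁ * (Real.Gamma ((k : ℝ) + a) * Real.Gamma (a - K₁))) ^ 2 := by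
    apply pow_le_pow_left₀ (by positivity) hk
  have e2 : ∀ z : ℝ, 0 < z → (z ^ K₁) ^ 2 = z ^ (2 * K₁) := by
    intro z hz
    rw [sq, ← Real.rpow_add hz]
    ring_nf
  have hmono : ((k : ℝ) + a - K₁) ^ (2 * K₁) ≤ ((k : ℝ) + a) ^ (2 * K₁) :=
    Real.rpow_le_rpow hx0.le (by linarith) (by positivity)
  calc Real.Gamma ((k : ℝ) + a - K₁) ^ 2 * Real.Gamma a ^ 2 * ((k : ℝ) + a - K₁) ^ (2 * K₁)
      ≤ Real.Gamma ((k : ℝ) + a - K₁) ^ 2 * Real.Gamma a ^ 2 * ((k : ℝ) + a) ^ (2 * K₁) := by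
        apply mul_le_mul_of_nonneg_left hmono (by positivity)
    _ = (Real.Gamma ((k : ℝ) + a - K₁) * Real.Gamma a * ((k : ℝ) + a) ^ K₁) ^ 2 := by
        rw [mul_pow, mul_pow, e2 _ hy0]
    _ ≤ (a ^ K₁ * (Real.Gamma ((k : ℝ) + a) * Real.Gamma (a - K₁))) ^ 2 := hsq
    _ = a ^ (2 * K₁) * (Real.Gamma ((k : ℝ) + a) ^ 2 * Real.Gamma (a - K₁) ^ 2) := by
        rw [mul_pow, mul_pow, e2 _ ha0]
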